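/- Let ρ(σ) = 4.88/(σ²(1 + 0.2σ²)) and α(σ) = 0.71·σ^{4/5} for σ > 0. Then the scintillation index σ_I²(α(σ), ρ(σ)) = (α + 2αρ + 2)/(α(1+ρ)²) satisfies: σ_I²·(as σ → 0⁺) ~ 2/ρ(σ) ~ 0.41σ² (matching weak-turbulence asymptotics up to first order), and σ_I² → 1 + 2/α(σ) = 1 + 2.82σ^{-4/5} as σ → ∞. Specifically: lim_{σ→∞} (σ_I²(α(σ),ρ(σ)) − 1)·σ^{4/5} = 2/0.71. -/

import Mathlib

open Real Filter Set

/-- Scintillation index of the H-K distribution. -/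
noncomputable def scintIndex (α ρ : ℝ) : ℝ := (α + 2 * α * ρ + 2) / (α * (1 + ρ) ^ 2)

/-- The paper's parameterization `ρ(σ) = 4.88/(σ²(1+0.2σ²))`. -/
noncomputable def ρHK (σ : ℝ) : ℝ := 4.88 / (σ ^ 2 * (1 + 0.2 * σ ^ 2))

/-- The paper's parameterization `α(σ) = 0.71 σ^{4/5}`. -/
noncomputable def αHK (σ : ℝ) : ℝ := 0.71 * σ ^ ((4 : ℝ) / 5)

/-- With `α(σ) = 0.71σ^{4/5}` and `ρ(σ) = 4.88/(σ²(1+0.2σ²))`, the H-K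
scintillation index `σ_I² = (α+2αρ+2)/(α(1+ρ)²)` satisfies
`σ_I² · ρ(σ) → 2` as `σ → 0⁺` (weak-turbulence asymptotics `σ_I² ~ 2/ρ(σ)`),
and `(σ_I² − 1)·σ^{4/5} → 2/0.71` as `σ → ∞` (strong-turbulence limit
`σ_I² → 1 + 2/α(σ)`). -/
theorem stmt_16 :
    Tendsto (fun σ : ℝ => scintIndex (αHK σ) (ρHK σ) * ρHK σ)
      (nhdsWithin 0 (Ioi 0)) (nhds 2) ∧
    Tendsto (fun σ : ℝ => (scintIndex (αHK σ) (ρHK σ) - 1) * σ ^ ((4 : ℝ) / 5))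
      atTop (nhds (2 / 0.71)) := by
  constructor
  · -- weak-turbulence limit: σ_I² · ρ(σ) → 2 as σ → 0⁺
    have key : ∀ σ ∈ Ioi (0:ℝ),
        (σ^2*(1+0.2*σ^2)/4.88 + 2 + 2 * (σ^((6:ℝ)/5)*(1+0.2*σ^2)/(4.88*0.71)))
          / (σ^2*(1+0.2*σ^2)/4.88 + 1)^2
        = scintIndex (αHK σ) (ρHK σ) * ρHK σ := by
      intro σ hσ
      have hσ0 : (0:ℝ) < σ := hσ
      have hs : 0 < σ^((4:ℝ)/5) := rpow_pos_of_pos hσ0 _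
      have ht : 0 < σ^((6:ℝ)/5) := rpow_pos_of_pos hσ0 _
      have hst : σ ^ 2 = σ^((4:ℝ)/5) * σ^((6:ℝ)/5) := by
        rw [← Real.rpow_natCast σ 2, ← Real.rpow_add hσ0]
        norm_num
      simp only [scintIndex, ρHK, αHK]
      rw [hst]
      generalize σ^((4:ℝ)/5) = s at hs ⊢
      generalize σ^((6:ℝ)/5) = t at ht ⊢
      have h1 : (0:ℝ) < 1 + 0.2*(s*t) := by positivity
      have h2 : (0:ℝ) < s*t*(1+0.2*(s*t)) := by positivity
      have h3 : (0:ℝ) < 4.88 / (s*t*(1+0.2*(s*t))) := by positivity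
      have h4 : (0:ℝ) < 1 + 4.88 / (s*t*(1+0.2*(s*t))) := by positivity
      field_simp
    have h65 : Tendsto (fun σ:ℝ => σ^((6:ℝ)/5)) (nhdsWithin 0 (Ioi 0)) (nhds 0) := by
      have h := (Real.continuousAt_rpow_const 0 ((6:ℝ)/5) (Or.inr (by norm_num))).tendsto
      rw [Real.zero_rpow (by norm_num)] at h
      exact h.mono_left nhdsWithin_le_nhds
    have hp : Tendsto (fun σ:ℝ => σ^2*(1+0.2*σ^2)) (nhdsWithin 0 (Ioi 0)) (nhds 0) := by
      have h : ContinuousAt (fun σ:ℝ => σ^2*(1+0.2*σ^2)) 0 := by fun_prop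
      have := h.tendsto.mono_left (nhdsWithin_le_nhds (s := Ioi (0:ℝ)))
      convert this using 2
      norm_num
    have h1 : Tendsto (fun σ:ℝ => 1+0.2*σ^2) (nhdsWithin 0 (Ioi 0)) (nhds 1) := by
      have h : ContinuousAt (fun σ:ℝ => 1+0.2*σ^2) 0 := by fun_prop
      have := h.tendsto.mono_left (nhdsWithin_le_nhds (s := Ioi (0:ℝ)))
      convert this using 2
      norm_num
    have num : Tendsto (fun σ:ℝ =>
        σ^2*(1+0.2*σ^2)/4.88 + 2 + 2 * (σ^((6:ℝ)/5)*(1+0.2*σ^2)/(4.88*0.71)))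
        (nhdsWithin 0 (Ioi 0)) (nhds 2) := by
      have := ((hp.div_const 4.88).add (tendsto_const_nhds (x := (2:ℝ)))).add
        ((tendsto_const_nhds (x := (2:ℝ))).mul ((h65.mul h1).div_const (4.88*0.71)))
      convert this using 2 <;> norm_num
    have den : Tendsto (fun σ:ℝ => (σ^2*(1+0.2*σ^2)/4.88 + 1)^2)
        (nhdsWithin 0 (Ioi 0)) (nhds 1) := by
      have := ((hp.div_const 4.88).add (tendsto_const_nhds (x := (1:ℝ)))).pow 2
      convert this using 2 <;> norm_num
    have hlim := num.div den (by norm_num)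
    have hlim2 : Tendsto (fun σ : ℝ =>
        (σ^2*(1+0.2*σ^2)/4.88 + 2 + 2 * (σ^((6:ℝ)/5)*(1+0.2*σ^2)/(4.88*0.71)))
          / (σ^2*(1+0.2*σ^2)/4.88 + 1)^2) (nhdsWithin 0 (Ioi 0)) (nhds 2) := by
      convert hlim using 2 <;> norm_num
    exact hlim2.congr' (eventuallyEq_of_mem self_mem_nhdsWithin key)
  · -- strong-turbulence limit
    have key : ∀ᶠ σ : ℝ in atTop,
        (2 - 0.71*4.88^2 * (σ^(-(16:ℝ)/5) / (1+0.2*σ^2)^2))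
          / (0.71 * (1 + 4.88/(σ^2*(1+0.2*σ^2)))^2)
        = (scintIndex (αHK σ) (ρHK σ) - 1) * σ ^ ((4 : ℝ) / 5) := by
      filter_upwards [eventually_gt_atTop (0:ℝ)] with σ hσ0
      have hs : 0 < σ^((4:ℝ)/5) := rpow_pos_of_pos hσ0 _
      have hu : 0 < σ^(-(16:ℝ)/5) := rpow_pos_of_pos hσ0 _
      have hst : σ^((4:ℝ)/5) = σ ^ 4 * σ^(-(16:ℝ)/5) := by
        rw [← Real.rpow_natCast σ 4, ← Real.rpow_add hσ0]
        norm_num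
      simp only [scintIndex, ρHK, αHK]
      rw [hst]
      have h4 : (0:ℝ) < σ^4 := by positivity
      generalize σ^(-(16:ℝ)/5) = u at hu hst ⊢
      have h1 : (0:ℝ) < 1 + 0.2*σ^2 := by positivity
      have h2 : (0:ℝ) < σ^2*(1+0.2*σ^2) := by positivity
      have h3 : (0:ℝ) < 1 + 4.88 / (σ^2*(1+0.2*σ^2)) := by positivity
      field_simp
      ring
    have hd : Tendsto (fun σ:ℝ => σ^2*(1+0.2*σ^2)) atTop atTop := by
      apply Tendsto.atTop_mul_atTop₀ (tendsto_pow_atTop (by norm_num))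
      apply tendsto_atTop_add_const_left
      exact (tendsto_pow_atTop (by norm_num)).const_mul_atTop (by norm_num)
    have hd2 : Tendsto (fun σ:ℝ => (1+0.2*σ^2)^2) atTop atTop := by
      apply Tendsto.comp (tendsto_pow_atTop (n := 2) (by norm_num))
      apply tendsto_atTop_add_const_left
      exact (tendsto_pow_atTop (by norm_num)).const_mul_atTop (by norm_num)
    have hu : Tendsto (fun σ:ℝ => σ^(-(16:ℝ)/5)) atTop (nhds 0) := by
      have := tendsto_rpow_neg_atTop (y := (16:ℝ)/5) (by norm_num)
      convert this using 2
      norm_num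
    have hn : Tendsto (fun σ:ℝ => 2 - 0.71*4.88^2 * (σ^(-(16:ℝ)/5) / (1+0.2*σ^2)^2))
        atTop (nhds 2) := by
      have := (tendsto_const_nhds (x := (2:ℝ))).sub
        ((tendsto_const_nhds (x := (0.71*4.88^2 : ℝ))).mul (hu.div_atTop hd2))
      convert this using 2 <;> norm_num
    have hden : Tendsto (fun σ:ℝ => 0.71 * (1 + 4.88/(σ^2*(1+0.2*σ^2)))^2)
        atTop (nhds 0.71) := by
      have := (tendsto_const_nhds (x := (0.71:ℝ))).mul
        (((tendsto_const_nhds (x := (1:ℝ))).add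
          ((tendsto_const_nhds (x := (4.88:ℝ))).div_atTop hd)).pow 2)
      convert this using 2 <;> norm_num
    have hlim := hn.div hden (by norm_num)
    have hlim2 : Tendsto (fun σ : ℝ =>
        (2 - 0.71*4.88^2 * (σ^(-(16:ℝ)/5) / (1+0.2*σ^2)^2))
          / (0.71 * (1 + 4.88/(σ^2*(1+0.2*σ^2)))^2)) atTop (nhds (2/0.71)) := hlim
    exact hlim2.congr' (key.mono fun σ h => h)
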